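/- Let W ∈ R^{d×m}, E ∈ R^{d×m}, and let V_proj = VVᵀ and V̂_proj = V̂V̂ᵀ be two orthogonal projections on R^m with V_proj = V̂_proj + F. Write Y* = W V_proj and Ŷ = (W+E) V̂_proj, with columns Y*_i, Ŷ_i. If ||Ŷ_i||₂ ≥ 1/π and ||Y*_i||₂ > 0, then 1 − cos(Θ(Y*_i, Ŷ_i)) ≤ (1 − s_i) + π(||F_i||₂||W||₂ + ||E||_F), where s_i = ||Y*_i||₂ / (||Y*_i||₂ + ||W||₂||F_i||₂ + ||E||_F + ||E||_F||F_i||₂) and F_i is the i-th column of F. -/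

import Mathlib

open Matrix

/-- Spectral norm (ℓ2 operator norm) of a real matrix. -/
noncomputable def specNorm {d m : ℕ} (W : Matrix (Fin d) (Fin m) ℝ) : ℝ :=
  ‖LinearMap.toContinuousLinearMap (Matrix.toEuclideanLin W)‖

/-- Frobenius norm of a matrix. -/
noncomputable def frobNorm {d m : ℕ} (A : Matrix (Fin d) (Fin m) ℝ) : ℝ :=
  Real.sqrt (Matrix.trace (Aᵀ * A))

/-- Euclidean norm of the i-th column of a matrix. -/
noncomputable def colNorm {d m : ℕ} (A : Matrix (Fin d) (Fin m) ℝ) (i : Fin m) : ℝ :=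
  Real.sqrt (∑ j, (A j i) ^ 2)

lemma colNorm_eq_norm {d m : ℕ} (A : Matrix (Fin d) (Fin m) ℝ) (i : Fin m) :
    colNorm A i = ‖(WithLp.equiv 2 (Fin d → ℝ)).symm (fun j => A j i)‖ := by
  rw [EuclideanSpace.norm_eq]
  simp [colNorm, Real.norm_eq_abs, sq_abs]

lemma colNorm_nonneg {d m : ℕ} (A : Matrix (Fin d) (Fin m) ℝ) (i : Fin m) :
    0 ≤ colNorm A i := Real.sqrt_nonneg _

lemma colNorm_mul_le_spec {d m k : ℕ} (W : Matrix (Fin d) (Fin m) ℝ)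
    (F : Matrix (Fin m) (Fin k) ℝ) (i : Fin k) :
    colNorm (W * F) i ≤ specNorm W * colNorm F i := by
  rw [colNorm_eq_norm, colNorm_eq_norm]
  have h : (WithLp.equiv 2 (Fin d → ℝ)).symm (fun j => (W * F) j i)
      = (LinearMap.toContinuousLinearMap (Matrix.toEuclideanLin W))
          ((WithLp.equiv 2 (Fin m → ℝ)).symm (fun l => F l i)) := by
    rw [LinearMap.coe_toContinuousLinearMap']
    rw [WithLp.equiv_symm_apply, WithLp.equiv_symm_apply, Matrix.toEuclideanLin_apply_piLp_toLp]
    congr 1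
  rw [h]
  exact ContinuousLinearMap.le_opNorm _ _

lemma frobNorm_eq {d m : ℕ} (E : Matrix (Fin d) (Fin m) ℝ) :
    frobNorm E = Real.sqrt (∑ k, ∑ j, (E j k) ^ 2) := by
  unfold frobNorm
  congr 1
  simp [Matrix.trace, Matrix.diag, Matrix.mul_apply, Matrix.transpose_apply, sq]

lemma frobNorm_nonneg {d m : ℕ} (E : Matrix (Fin d) (Fin m) ℝ) :
    0 ≤ frobNorm E := Real.sqrt_nonneg _

lemma colNorm_mul_le_frob {d m k : ℕ} (E : Matrix (Fin d) (Fin m) ℝ)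
    (P : Matrix (Fin m) (Fin k) ℝ) (i : Fin k) :
    colNorm (E * P) i ≤ frobNorm E * colNorm P i := by
  rw [frobNorm_eq, colNorm, colNorm, ← Real.sqrt_mul (by positivity)]
  apply Real.sqrt_le_sqrt
  calc ∑ j, ((E * P) j i) ^ 2
      = ∑ j, (∑ l, E j l * P l i) ^ 2 := by simp [Matrix.mul_apply]
    _ ≤ ∑ j, (∑ l, (E j l) ^ 2) * (∑ l, (P l i) ^ 2) := by
        apply Finset.sum_le_sum
        intro j _
        exact Finset.sum_mul_sq_le_sq_mul_sq _ _ _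
    _ = (∑ k, ∑ j, (E j k) ^ 2) * ∑ j, (P j i) ^ 2 := by
        rw [← Finset.sum_mul, Finset.sum_comm]

lemma colNorm_proj_le_one {m : ℕ} (P : Matrix (Fin m) (Fin m) ℝ)
    (hP : Pᵀ = P) (hP2 : P * P = P) (i : Fin m) :
    colNorm P i ≤ 1 := by
  have hsum : ∑ j, (P j i) ^ 2 = P i i := by
    have h2 := congrFun (congrFun hP2 i) i
    rw [Matrix.mul_apply] at h2
    rw [← h2]
    apply Finset.sum_congr rfl
    intro j _
    have hsym : P i j = P j i := by
      rw [← congrFun (congrFun hP i) j]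
      exact Matrix.transpose_apply P i j
    rw [hsym, sq]
  have h1 : (P i i) ^ 2 ≤ ∑ j, (P j i) ^ 2 :=
    Finset.single_le_sum (f := fun j => (P j i) ^ 2)
      (fun j _ => sq_nonneg _) (Finset.mem_univ i)
  rw [hsum] at h1
  have h0 : 0 ≤ P i i := by
    rw [← hsum]; positivity
  have hle1 : P i i ≤ 1 := by nlinarith
  rw [colNorm, hsum]
  exact Real.sqrt_le_one.mpr hle1

lemma inner_col {d : ℕ} (x y : Fin d → ℝ) :
    (inner ℝ ((WithLp.equiv 2 (Fin d → ℝ)).symm x) ((WithLp.equiv 2 (Fin d → ℝ)).symm y) : ℝ)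
      = ∑ j, x j * y j := by
  rw [PiLp.inner_apply]
  simp [RCLike.inner_apply, mul_comm]

set_option maxHeartbeats 1000000 in
/-- Perturbation bound: with orthogonal projections P = P̂ + F,
Y* = WP, Ŷ = (W+E)P̂, if ‖Ŷ_i‖ ≥ 1/π and ‖Y*_i‖ > 0, then
1 − cos Θ(Y*_i, Ŷ_i) ≤ (1 − s_i) + π(‖F_i‖₂‖W‖₂ + ‖E‖_F), where
s_i = ‖Y*_i‖/(‖Y*_i‖ + ‖W‖₂‖F_i‖₂ + ‖E‖_F + ‖E‖_F‖F_i‖₂). -/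
theorem stmt16 (d m : ℕ) (W E : Matrix (Fin d) (Fin m) ℝ)
    (Pr Prhat : Matrix (Fin m) (Fin m) ℝ)
    (hPr : Prᵀ = Pr) (hPr2 : Pr * Pr = Pr)
    (hPrhat : Prhatᵀ = Prhat) (hPrhat2 : Prhat * Prhat = Prhat)
    (F : Matrix (Fin m) (Fin m) ℝ) (hF : Pr = Prhat + F)
    (Ystar Yhat : Matrix (Fin d) (Fin m) ℝ)
    (hYstar : Ystar = W * Pr) (hYhat : Yhat = (W + E) * Prhat)
    (i : Fin m)
    (hYhatlb : 1 / Real.pi ≤ colNorm Yhat i) (hYstarpos : 0 < colNorm Ystar i) :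
    1 - (∑ j, Ystar j i * Yhat j i) / (colNorm Ystar i * colNorm Yhat i)
      ≤ (1 - colNorm Ystar i /
            (colNorm Ystar i + specNorm W * colNorm F i + frobNorm E
              + frobNorm E * colNorm F i))
        + Real.pi * (colNorm F i * specNorm W + frobNorm E) := by
  have hpi : (0:ℝ) < Real.pi := Real.pi_pos
  -- abbreviations
  set na := colNorm Ystar i with hna
  set nb := colNorm Yhat i with hnb
  have hnbpos : 0 < nb := lt_of_lt_of_le (by positivity) hYhatlb
  set D : ℝ := specNorm W * colNorm F i + frobNorm E with hD
  have hspec : (0:ℝ) ≤ specNorm W := norm_nonneg _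
  have hFi : (0:ℝ) ≤ colNorm F i := colNorm_nonneg _ _
  have hfrob : (0:ℝ) ≤ frobNorm E := frobNorm_nonneg _
  have hDnn : 0 ≤ D := by positivity
  set t : ℝ := na + D + frobNorm E * colNorm F i with ht
  have htpos : 0 < t := by positivity
  -- column vectors in Euclidean space
  set a : EuclideanSpace ℝ (Fin d) := (WithLp.equiv 2 (Fin d → ℝ)).symm (fun j => Ystar j i) with ha
  set b : EuclideanSpace ℝ (Fin d) := (WithLp.equiv 2 (Fin d → ℝ)).symm (fun j => Yhat j i) with hb
  set u : EuclideanSpace ℝ (Fin d) := (WithLp.equiv 2 (Fin d → ℝ)).symm (fun j => (W * F) j i) with hu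
  set v : EuclideanSpace ℝ (Fin d) := (WithLp.equiv 2 (Fin d → ℝ)).symm (fun j => (E * Prhat) j i) with hv
  have hnaa : na = ‖a‖ := colNorm_eq_norm Ystar i
  have hnbb : nb = ‖b‖ := colNorm_eq_norm Yhat i
  -- decomposition b = a - u + v
  have hdecomp : b = a - u + v := by
    ext j
    have : Yhat j i = Ystar j i - (W * F) j i + (E * Prhat) j i := by
      subst hYstar hYhat hF
      simp [Matrix.mul_apply, Matrix.add_apply, mul_add, add_mul,
        Finset.sum_add_distrib]
    simpa [hb, ha, hu, hv] using this
  -- bound on the perturbation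
  have hub : ‖u‖ ≤ specNorm W * colNorm F i := by
    rw [← colNorm_eq_norm]; exact colNorm_mul_le_spec W F i
  have hvb : ‖v‖ ≤ frobNorm E := by
    rw [← colNorm_eq_norm]
    calc colNorm (E * Prhat) i ≤ frobNorm E * colNorm Prhat i :=
          colNorm_mul_le_frob E Prhat i
      _ ≤ frobNorm E * 1 := by
          apply mul_le_mul_of_nonneg_left (colNorm_proj_le_one Prhat hPrhat hPrhat2 i) hfrob
      _ = frobNorm E := mul_one _
  have hdelta : ‖b - a‖ ≤ D := by
    have : b - a = v - u := by rw [hdecomp]; abel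
    rw [this]
    calc ‖v - u‖ ≤ ‖v‖ + ‖u‖ := norm_sub_le _ _
      _ ≤ frobNorm E + specNorm W * colNorm F i := add_le_add hvb hub
      _ = D := by rw [hD]; ring
  -- nb ≤ t
  have hnbt : nb ≤ t := by
    have h5 : ‖b‖ - ‖a‖ ≤ ‖b - a‖ := norm_sub_norm_le b a
    rw [← hnaa, ← hnbb] at h5
    have := mul_nonneg hfrob hFi
    rw [ht]
    linarith
  -- inner product lower bound
  have hinner : na ^ 2 - na * D ≤ ∑ j, Ystar j i * Yhat j i := by
    have hip : (∑ j, Ystar j i * Yhat j i) = (inner ℝ a b : ℝ) := by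
      rw [ha, hb, inner_col]
    have h1 : (inner ℝ a b : ℝ) = ‖a‖ ^ 2 + (inner ℝ a (b - a) : ℝ) := by
      rw [inner_sub_right, real_inner_self_eq_norm_sq]; ring
    have h2 : -(‖a‖ * D) ≤ (inner ℝ a (b - a) : ℝ) := by
      have h3 : |(inner ℝ a (b - a) : ℝ)| ≤ ‖a‖ * ‖b - a‖ := abs_real_inner_le_norm a (b - a)
      have h4 := neg_abs_le ((inner ℝ a (b - a) : ℝ))
      have hmul : ‖a‖ * ‖b - a‖ ≤ ‖a‖ * D :=
        mul_le_mul_of_nonneg_left hdelta (norm_nonneg _)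
      linarith
    rw [hip, h1, ← hnaa]
    nlinarith
  -- main chain
  have hπnb : 1 ≤ Real.pi * nb := by
    rw [div_le_iff₀ hpi] at hYhatlb
    linarith [hYhatlb]
  have hπt : 1 ≤ Real.pi * t := le_trans hπnb (by nlinarith)
  have key : na / t ≤ (na - D) / nb + Real.pi * D := by
    rcases le_or_gt D na with hcase | hcase
    · have h1 : (na - D) / t ≤ (na - D) / nb := by
        apply div_le_div_of_nonneg_left (by linarith) hnbpos hnbt
      have h2 : D / t ≤ Real.pi * D := by
        rw [div_le_iff₀ htpos]
        nlinarith
      have : na / t = (na - D) / t + D / t := by field_simp; ring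
      linarith
    · have h1 : na / t ≤ Real.pi * na := by
        rw [div_le_iff₀ htpos]
        nlinarith [hYstarpos]
      have h2 : Real.pi * (na - D) ≤ (na - D) / nb := by
        rw [le_div_iff₀ hnbpos]
        nlinarith
      linarith [mul_sub Real.pi na D ▸ h2]
  have hstep1 : (na - D) / nb ≤ (∑ j, Ystar j i * Yhat j i) / (na * nb) := by
    have heq : (na - D) / nb = (na ^ 2 - na * D) / (na * nb) := by
      rw [sq]
      rw [div_eq_div_iff (ne_of_gt hnbpos) (by positivity)]
      ring
    rw [heq]
    gcongr
  have hgoal : na / t ≤ (∑ j, Ystar j i * Yhat j i) / (na * nb) + Real.pi * D := by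
    linarith
  have hDcomm : colNorm F i * specNorm W + frobNorm E = D := by rw [hD]; ring
  have htcomm : na + specNorm W * colNorm F i + frobNorm E + frobNorm E * colNorm F i = t := by
    rw [ht, hD]; ring
  rw [hDcomm, htcomm]
  linarith
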